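/- Let m₁ > … > mₙ be distinct real slopes and fix intercepts making all lines concurrent at a point p₀. Then for every k with 1 ≤ k ≤ n, one can translate the lines L₁, …, L_k one at a time in the positive x-direction (keeping slopes fixed) so that, at each step, all intersection points created by the newly translated line have x-coordinates strictly smaller than the x-coordinates of all intersection points created at earlier steps, and the final arrangement is in general position with all intersection points having distinct x-coordinates. -/
import Mathlib


/-- Starting from n concurrent lines with strictly decreasing slopes, one can translate
the lines one at a time in the positive x-direction (replacing cᵢ by cᵢ - mᵢ tᵢ with
tᵢ > 0) so that intersections created at each step lie strictly to the left of all
previously created ones, and the final arrangement is in general position with all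
intersection points having distinct x-coordinates. -/
theorem stmt14 (n : ℕ) (hn : 1 ≤ n) (m : Fin n → ℝ) (hm : StrictAnti m)
    (p₀ : ℝ × ℝ) :
    ∃ t c : Fin n → ℝ,
      (∀ i, 0 < t i) ∧
      (∀ i, c i = (p₀.2 - m i * p₀.1) - m i * t i) ∧
      (∀ p : ℝ × ℝ, ∀ i j k : Fin n,
          p.2 = m i * p.1 + c i → p.2 = m j * p.1 + c j → p.2 = m k * p.1 + c k →
          i = j ∨ i = k ∨ j = k) ∧
      (∀ i j i' j' : Fin n, i < j → i' < j' → (i, j) ≠ (i', j') →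
          (c j - c i) / (m i - m j) ≠ (c j' - c i') / (m i' - m j')) ∧
      (∀ i j i' j' : Fin n, i < j → i' < j' → i < i' →
          (c j' - c i') / (m i' - m j') < (c j - c i) / (m i - m j)) ∧
      (∀ i j j' : Fin n, i < j → j < j' →
          (c j' - c i) / (m i - m j') < (c j - c i) / (m i - m j)) := by
  rcases Nat.lt_or_ge n 2 with hn1 | hn2
  · -- n = 1 : trivial case
    refine ⟨fun _ => 1, fun i => (p₀.2 - m i * p₀.1) - m i * 1, fun _ => one_pos,
      fun i => rfl, ?_, ?_, ?_, ?_⟩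
    · intro p i j k _ _ _
      left
      have : i.val = j.val := by have := i.isLt; have := j.isLt; omega
      exact Fin.ext this
    · intro i j i' j' hij _ _
      exact absurd hij (by rw [Fin.lt_def]; have := i.isLt; have := j.isLt; omega)
    · intro i j i' j' hij _ _
      exact absurd hij (by rw [Fin.lt_def]; have := i.isLt; have := j.isLt; omega)
    · intro i j j' hij _
      exact absurd hij (by rw [Fin.lt_def]; have := i.isLt; have := j.isLt; omega)
  · -- main case : n ≥ 2
    have h0n : 0 < n := by omega
    have h1n : 1 < n := by omega
    set D : ℝ := m ⟨0, h0n⟩ - m ⟨n - 1, by omega⟩ with hD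
    obtain ⟨δ, hδpos, hδle⟩ :
        ∃ δ : ℝ, 0 < δ ∧ ∀ i j : Fin n, i < j → δ ≤ m i - m j := by
      classical
      set S : Finset ℝ :=
        (Finset.univ.filter fun p : Fin n × Fin n => p.1 < p.2).image
          fun p : Fin n × Fin n => m p.1 - m p.2 with hS
      have hSne : S.Nonempty := by
        refine ⟨m ⟨0, h0n⟩ - m ⟨1, h1n⟩, ?_⟩
        rw [hS, Finset.mem_image]
        refine ⟨(⟨0, h0n⟩, ⟨1, h1n⟩), ?_, rfl⟩
        rw [Finset.mem_filter]
        exact ⟨Finset.mem_univ _, Fin.mk_lt_mk.mpr one_pos⟩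
      refine ⟨S.min' hSne, ?_, ?_⟩
      · rw [Finset.lt_min'_iff]
        intro y hy
        rw [hS, Finset.mem_image] at hy
        obtain ⟨p, hp, hpe⟩ := hy
        rw [Finset.mem_filter] at hp
        rw [← hpe]
        exact sub_pos.mpr (hm hp.2)
      · intro i j hij
        apply S.min'_le
        rw [hS, Finset.mem_image]
        refine ⟨(i, j), ?_, rfl⟩
        rw [Finset.mem_filter]
        exact ⟨Finset.mem_univ _, hij⟩
    have hDge : ∀ i j : Fin n, m i - m j ≤ D := by
      intro i j
      have h1 : m i ≤ m ⟨0, h0n⟩ :=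
        hm.antitone (by rw [Fin.le_def]; exact Nat.zero_le _)
      have h2 : m ⟨n - 1, by omega⟩ ≤ m j := by
        apply hm.antitone
        rw [Fin.le_def]
        show j.val ≤ n - 1
        have := j.isLt; omega
      rw [hD]; linarith
    have hδD : δ ≤ D := hδle ⟨0, h0n⟩ ⟨n - 1, by omega⟩ (Fin.mk_lt_mk.mpr (by omega))
    have hDpos : 0 < D := lt_of_lt_of_le hδpos hδD
    set K : ℝ := 2 + D / δ with hK
    have hK2 : 2 ≤ K := by
      have : 0 < D / δ := div_pos hDpos hδpos
      rw [hK]; linarith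
    have hK1 : 1 ≤ K := by linarith
    have hKδ : K * δ = 2 * δ + D := by
      rw [hK]; field_simp
    set u : Fin n → ℝ := fun i => K ^ (n - 1 - i.val) with hu
    have hu1 : ∀ i, 1 ≤ u i := fun i => one_le_pow₀ hK1
    have hu0 : ∀ i, 0 < u i := fun i => lt_of_lt_of_le one_pos (hu1 i)
    have humono : ∀ i j : Fin n, i ≤ j → u j ≤ u i := by
      intro i j hij
      rw [Fin.le_def] at hij
      exact pow_le_pow_right₀ hK1 (by omega)
    have huK : ∀ i j : Fin n, i < j → K * u j ≤ u i := by
      intro i j hij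
      rw [Fin.lt_def] at hij
      have hj := j.isLt
      have : K * u j = K ^ (n - 1 - j.val + 1) := by rw [pow_succ]; ring
      rw [this, hu]
      exact pow_le_pow_right₀ hK1 (by omega)
    -- the two key inequalities on g(i,j) = (u i - u j)/(m i - m j)
    have g6 : ∀ i j j' : Fin n, i < j → j < j' →
        (u i - u j') / (m i - m j') < (u i - u j) / (m i - m j) := by
      intro i j j' hij hjj'
      have d1 : 0 < m i - m j := sub_pos.mpr (hm hij)
      have d2 : 0 < m i - m j' := sub_pos.mpr (hm (hij.trans hjj'))
      rw [div_lt_div_iff₀ d2 d1]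
      have h1 : K * u j * δ ≤ u i * (m j - m j') :=
        mul_le_mul (huK i j hij) (hδle j j' hjj') hδpos.le (hu0 i).le
      have h2 : u j * (m i - m j') ≤ u j * D :=
        mul_le_mul_of_nonneg_left (hDge i j') (hu0 j).le
      have h3 : 0 < u j' * (m i - m j) := mul_pos (hu0 j') d1
      have h4 : u j * (K * δ) = u j * (2 * δ + D) := by rw [hKδ]
      nlinarith [hu1 j, hδpos, mul_le_mul_of_nonneg_left hδD (hu0 j).le]
    have g5 : ∀ i j i' j' : Fin n, i < j → i' < j' → i < i' →
        (u i' - u j') / (m i' - m j') < (u i - u j) / (m i - m j) := by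
      intro i j i' j' hij hij' hii'
      have d1 : 0 < m i - m j := sub_pos.mpr (hm hij)
      have d2 : 0 < m i' - m j' := sub_pos.mpr (hm hij')
      rw [div_lt_div_iff₀ d2 d1]
      have hi1 : i.val + 1 < n := by
        have := i'.isLt
        have := Fin.lt_def.mp hii'
        omega
      set e : ℝ := u ⟨i.val + 1, hi1⟩ with he
      have he1 : 1 ≤ e := hu1 _
      have hie : u i = K * e := by
        have h3 : n - 1 - i.val = n - 1 - (i.val + 1) + 1 := by
          have hj' := j'.isLt
          have h1 := Fin.lt_def.mp hii'
          have h2 := Fin.lt_def.mp hij'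
          omega
        show K ^ (n - 1 - i.val) = K * K ^ (n - 1 - (i.val + 1))
        rw [h3, pow_succ]; ring
      have hje : u j ≤ e := humono _ j (by rw [Fin.le_def]; exact Fin.lt_def.mp hij)
      have hi'e : u i' ≤ e := humono _ i' (by rw [Fin.le_def]; exact Fin.lt_def.mp hii')
      have hj'1 : 1 ≤ u j' := hu1 j'
      have hδ2 : δ ≤ m i' - m j' := hδle i' j' hij'
      have hD2 : m i - m j ≤ D := hDge i j
      -- LHS ≤ (e-1)*D < e*δ + e*D - δ ≤ RHS roughly
      have hL : (u i' - u j') * (m i - m j) ≤ (e - 1) * D := by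
        apply mul_le_mul (by linarith) hD2 d1.le (by linarith)
      have hR : (K * e - e) * δ ≤ (u i - u j) * (m i' - m j') := by
        apply mul_le_mul (by rw [hie]; linarith) hδ2 hδpos.le
        rw [hie]
        nlinarith
      have hmid : (e - 1) * D < (K * e - e) * δ := by nlinarith
      linarith
    -- construct t and c
    set a : ℝ := ∑ i, if m i = 0 then u i else 0 with ha
    set w : Fin n → ℝ := fun i => u i - a with hw
    have hw0 : ∀ i, m i = 0 → w i = 0 := by
      intro i hi
      have : a = u i := by
        rw [ha]
        rw [Finset.sum_eq_single_of_mem i (Finset.mem_univ i)]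
        · simp [hi]
        · intro j _ hji
          have : ¬ m j = 0 := fun h => hji (hm.injective (h.trans hi.symm))
          simp [this]
      rw [hw]; simp [this]
    set T : ℝ := 1 + ∑ j, |w j / m j| with hT
    set t : Fin n → ℝ := fun i => if m i = 0 then 1 else w i / m i + T with ht
    have htpos : ∀ i, 0 < t i := by
      intro i
      rw [ht]
      by_cases hi : m i = 0
      · simp [hi]
      · simp only [hi, if_false]
        have h1 : |w i / m i| ≤ ∑ j, |w j / m j| :=
          Finset.single_le_sum (f := fun j => |w j / m j|)
            (fun j _ => abs_nonneg _) (Finset.mem_univ i)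
        have h2 : -(|w i / m i|) ≤ w i / m i := neg_abs_le _
        rw [hT]; linarith
    have hmt : ∀ i, m i * t i = w i + T * m i := by
      intro i
      rw [ht]
      by_cases hi : m i = 0
      · simp [hi, hw0 i hi]
      · simp only [hi, if_false]
        field_simp
    set C : Fin n → ℝ := fun i => (p₀.2 - m i * p₀.1) - m i * t i with hC
    have hx : ∀ i j : Fin n, i ≠ j →
        (C j - C i) / (m i - m j) = (p₀.1 + T) + (u i - u j) / (m i - m j) := by
      intro i j hij
      have hne : m i - m j ≠ 0 := sub_ne_zero.mpr fun h => hij (hm.injective h)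
      have hCji : C j - C i = (u i - u j) + (p₀.1 + T) * (m i - m j) := by
        rw [hC]
        simp only
        rw [hmt i, hmt j, hw]
        simp only
        ring
      rw [hCji]
      field_simp
      ring
    -- the final inequalities
    have cond6 : ∀ i j j' : Fin n, i < j → j < j' →
        (C j' - C i) / (m i - m j') < (C j - C i) / (m i - m j) := by
      intro i j j' hij hjj'
      rw [hx i j' (ne_of_lt (hij.trans hjj')), hx i j (ne_of_lt hij)]
      linarith [g6 i j j' hij hjj']
    have cond5 : ∀ i j i' j' : Fin n, i < j → i' < j' → i < i' →
        (C j' - C i') / (m i' - m j') < (C j - C i) / (m i - m j) := by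
      intro i j i' j' hij hij' hii'
      rw [hx i' j' (ne_of_lt hij'), hx i j (ne_of_lt hij)]
      linarith [g5 i j i' j' hij hij' hii']
    have key : ∀ a b : Fin n, a < b → ∀ p : ℝ × ℝ,
        p.2 = m a * p.1 + C a → p.2 = m b * p.1 + C b →
        p.1 = (C b - C a) / (m a - m b) := by
      intro a b hab p h1 h2
      have hne : m a - m b ≠ 0 := ne_of_gt (sub_pos.mpr (hm hab))
      rw [eq_div_iff hne]
      linear_combination h2 - h1
    refine ⟨t, C, htpos, fun i => rfl, ?_, ?_, cond5, cond6⟩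
    · -- no three concurrent
      intro p i j k h1 h2 h3
      by_cases hij : i = j
      · exact Or.inl hij
      by_cases hik : i = k
      · exact Or.inr (Or.inl hik)
      by_cases hjk : j = k
      · exact Or.inr (Or.inr hjk)
      exfalso
      have tri : ∀ a b c : Fin n, a < b → b < c →
          p.2 = m a * p.1 + C a → p.2 = m b * p.1 + C b → p.2 = m c * p.1 + C c →
          False := by
        intro a b c hab hbc ha hb hc
        have e1 := key a b hab p ha hb
        have e2 := key a c (hab.trans hbc) p ha hc
        have := cond6 a b c hab hbc
        rw [← e1, ← e2] at this
        exact lt_irrefl _ this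
      rcases lt_trichotomy i j with hij' | hij' | hij'
      · rcases lt_trichotomy j k with hjk' | hjk' | hjk'
        · exact tri i j k hij' hjk' h1 h2 h3
        · exact hjk hjk'
        · rcases lt_trichotomy i k with hik' | hik' | hik'
          · exact tri i k j hik' hjk' h1 h3 h2
          · exact hik hik'
          · exact tri k i j hik' hij' h3 h1 h2
      · exact hij hij'
      · rcases lt_trichotomy i k with hik' | hik' | hik'
        · exact tri j i k hij' hik' h2 h1 h3
        · exact hik hik'
        · rcases lt_trichotomy j k with hjk' | hjk' | hjk'
          · exact tri j k i hjk' hik' h2 h3 h1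
          · exact hjk hjk'
          · exact tri k j i hjk' hij' h3 h2 h1
    · -- distinct x-coordinates
      intro i j i' j' hij hij' hpair
      rcases lt_trichotomy i i' with h | h | h
      · exact ne_of_gt (cond5 i j i' j' hij hij' h)
      · subst h
        have hjj : j ≠ j' := fun hh => hpair (by rw [hh])
        rcases lt_trichotomy j j' with h2 | h2 | h2
        · exact ne_of_gt (cond6 i j j' hij h2)
        · exact absurd h2 hjj
        · exact ne_of_lt (cond6 i j' j hij' h2)
      · exact ne_of_lt (cond5 i' j' i j hij' hij h)
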